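/- The Bernoulli-Catalan polynomial Q_n has degree n with leading coefficient A_n = 2^{1-n}C_{n-1}, coefficient of z^{n-1} equal to -(n/2)A_n, and (for n ≥ 2) coefficient of z^{n-2} equal to (n(n-1)/8)A_n - 2^{n-2}(n-1)/12. -/

import Mathlib

open Polynomial Finset

/-- The operator `𝒦 = 2 ∑_{r≥1} ((2^{2r}-1)/(2r)!) B_{2r} (d/dz)^{2r-2}` acting on
polynomials (the sum is finite on any polynomial, since high derivatives vanish). -/
noncomputable def KOp (P : Polynomial ℚ) : Polynomial ℚ :=
  2 * ∑ r ∈ Finset.Icc 1 (P.natDegree + 1),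
    Polynomial.C ((((2 : ℚ) ^ (2 * r) - 1) / (Nat.factorial (2 * r))) * _root_.bernoulli (2 * r)) *
      (Polynomial.derivative^[2 * r - 2] P)

namespace BCAux


lemma cb (i : ℕ) : ((i : ℚ) + 1) * (catalan i : ℚ) = Nat.centralBinom i := by
  have := succ_mul_catalan_eq_centralBinom i
  exact_mod_cast congrArg (fun x : ℕ => (x : ℚ)) this

lemma cb_succ (i : ℕ) : ((i : ℚ) + 1) * (Nat.centralBinom (i+1) : ℚ)
    = 2 * (2*(i:ℚ)+1) * Nat.centralBinom i := by
  have := Nat.succ_mul_centralBinom_succ i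
  have : ((i+1) * Nat.centralBinom (i+1) : ℕ) = (2 * (2*i+1) * Nat.centralBinom i : ℕ) := this
  exact_mod_cast congrArg (fun x : ℕ => (x : ℚ)) this

lemma catalan_conv (m : ℕ) :
    ∑ i ∈ range (m+1), (catalan i : ℚ) * (catalan (m - i) : ℚ) = catalan (m+1) := by
  rw [catalan_succ' m, Nat.sum_antidiagonal_eq_sum_range_succ_mk]
  push_cast
  rfl

lemma half_sym (m : ℕ) (f : ℕ → ℚ) (hf : ∀ i ∈ range (m+1), f (m - i) = f i) :
    2 * ∑ i ∈ range (m+1), (i : ℚ) * f i = (m : ℚ) * ∑ i ∈ range (m+1), f i := by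
  have h1 : ∑ i ∈ range (m+1), (i : ℚ) * f i
      = ∑ i ∈ range (m+1), ((m : ℚ) - i) * f i := by
    rw [← Finset.sum_range_reflect (fun i => (i : ℚ) * f i) (m+1)]
    refine Finset.sum_congr rfl fun i hi => ?_
    have hi' : i ≤ m := by simpa [Nat.lt_succ_iff] using hi
    have : m + 1 - 1 - i = m - i := by omega
    rw [this, hf i hi]
    have : ((m - i : ℕ) : ℚ) = (m : ℚ) - i := by
      push_cast [Nat.cast_sub hi']; ring
    rw [this]
  have : 2 * ∑ i ∈ range (m+1), (i : ℚ) * f i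
      = ∑ i ∈ range (m+1), (i : ℚ) * f i + ∑ i ∈ range (m+1), ((m : ℚ) - i) * f i := by
    rw [← h1]; ring
  rw [this, ← Finset.sum_add_distrib, Finset.mul_sum]
  refine Finset.sum_congr rfl fun i hi => ?_
  ring

lemma t_eq (m : ℕ) :
    ∑ i ∈ range (m+1), (Nat.centralBinom i : ℚ) * (Nat.centralBinom (m - i) : ℚ) = 4 ^ m := by
  induction m with
  | zero => simp [Nat.centralBinom]
  | succ m ih =>
    set f : ℕ → ℚ := fun i => (Nat.centralBinom i : ℚ) * (Nat.centralBinom (m + 1 - i) : ℚ) with hfdef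
    have hfsym : ∀ i ∈ range (m+2), f (m + 1 - i) = f i := by
      intro i hi
      have hi' : i ≤ m + 1 := by simpa [Nat.lt_succ_iff] using hi
      simp only [hfdef]
      have : m + 1 - (m + 1 - i) = i := by omega
      rw [this, mul_comm]
    -- half_sym at m+1
    have hs := half_sym (m+1) f hfsym
    -- shift sum
    have hshift : ∑ i ∈ range (m+2), (i : ℚ) * f i
        = ∑ i ∈ range (m+1), ((i : ℚ) + 1) * f (i+1) := by
      rw [Finset.sum_range_succ' (fun i => (i : ℚ) * f i) (m+1)]
      push_cast
      simp
    have hstep : ∀ i ∈ range (m+1), ((i : ℚ) + 1) * f (i+1)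
        = 2 * (2*(i:ℚ)+1) * ((Nat.centralBinom i : ℚ) * (Nat.centralBinom (m - i) : ℚ)) := by
      intro i hi
      simp only [hfdef]
      have : m + 1 - (i+1) = m - i := by omega
      rw [this, ← mul_assoc, cb_succ i]
      ring
    have hsum2 : ∑ i ∈ range (m+1), ((i : ℚ) + 1) * f (i+1)
        = 4 * (∑ i ∈ range (m+1), (i:ℚ) * ((Nat.centralBinom i : ℚ) * (Nat.centralBinom (m - i) : ℚ)))
          + 2 * ∑ i ∈ range (m+1), (Nat.centralBinom i : ℚ) * (Nat.centralBinom (m - i) : ℚ) := by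
      rw [Finset.sum_congr rfl hstep, Finset.mul_sum, Finset.mul_sum, ← Finset.sum_add_distrib]
      exact Finset.sum_congr rfl fun i hi => by ring
    have hgsym : ∀ i ∈ range (m+1),
        (fun i => (Nat.centralBinom i : ℚ) * (Nat.centralBinom (m - i) : ℚ)) (m - i)
        = (fun i => (Nat.centralBinom i : ℚ) * (Nat.centralBinom (m - i) : ℚ)) i := by
      intro i hi
      have hi' : i ≤ m := by simpa [Nat.lt_succ_iff] using hi
      have : m - (m - i) = i := by omega
      simp only [this, mul_comm]
    have hs0 := half_sym m (fun i => (Nat.centralBinom i : ℚ) * (Nat.centralBinom (m - i) : ℚ)) hgsym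
    -- combine : (m+1) * t(m+1) = 2 * (4 * (m/2 * t m) + 2 * t m)
    have hm1 : ((m:ℚ)+1) ≠ 0 := by positivity
    have key : ((m:ℚ)+1) * ∑ i ∈ range (m+2), f i = ((m:ℚ)+1) * (4 * 4 ^ m) := by
      have e1 : ((m:ℚ)+1) * ∑ i ∈ range (m+2), f i
          = 2 * ∑ i ∈ range (m+2), (i : ℚ) * f i := by
        rw [hs]; push_cast; ring
      rw [e1, hshift, hsum2, ih]
      have e2 : (4:ℚ) * ∑ i ∈ range (m+1), (i:ℚ) * ((Nat.centralBinom i : ℚ) * (Nat.centralBinom (m - i) : ℚ))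
          = 2 * ((m:ℚ) * (4:ℚ)^m) := by
        rw [← ih]
        linear_combination 2 * hs0
      linarith [e2]
    have := mul_left_cancel₀ hm1 key
    rw [this]; ring


lemma cb_rec (m : ℕ) : (Nat.centralBinom (m+1) : ℚ)
    = 4 * (Nat.centralBinom m : ℚ) - 2 * (catalan m : ℚ) := by
  have h1 := cb m; have h2 := cb_succ m
  have hm : ((m:ℚ)+1) ≠ 0 := by positivity
  apply mul_left_cancel₀ hm
  linear_combination h2 + 2*h1

lemma cat_rec (m : ℕ) : ((m:ℚ)+3) * (catalan (m+2) : ℚ)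
    = (4*(m:ℚ)+6) * (catalan (m+1) : ℚ) := by
  have h1 := cb (m+1); have h2 := cb (m+2); have h3 := cb_rec (m+1)
  push_cast at h1 h2 h3 ⊢
  linear_combination h2 + h3 - 4 * h1

lemma v_eq (m : ℕ) :
    ∑ i ∈ range (m+1), (4:ℚ)^i * (catalan (m - i) : ℚ)
      = ((4:ℚ)^(m+1) - (Nat.centralBinom (m+1) : ℚ))/2 := by
  induction m with
  | zero => norm_num [Nat.centralBinom, Nat.choose]
  | succ m ih =>
    rw [Finset.sum_range_succ' (fun i => (4:ℚ)^i * (catalan (m + 1 - i) : ℚ)) (m+1)]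
    have e1 : ∑ i ∈ range (m+1), (4:ℚ)^(i+1) * (catalan (m + 1 - (i+1)) : ℚ)
        = 4 * ∑ i ∈ range (m+1), (4:ℚ)^i * (catalan (m - i) : ℚ) := by
      rw [Finset.mul_sum]
      refine Finset.sum_congr rfl fun i hi => ?_
      have h : m + 1 - (i+1) = m - i := by omega
      rw [h]; ring
    rw [e1, ih]
    have h3 := cb_rec (m+1)
    push_cast at h3 ⊢
    linear_combination (1/2) * h3

lemma u_eq (m : ℕ) :
    ∑ i ∈ range (m+1), (4:ℚ)^i * (i:ℚ) * (catalan (m - i) : ℚ)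
      = 2*((m:ℚ)+1) * 4^m - ((m:ℚ)+1)*((m:ℚ)+2) * (catalan (m+1) : ℚ) := by
  induction m with
  | zero => norm_num [catalan_one]
  | succ m ih =>
    rw [Finset.sum_range_succ' (fun i => (4:ℚ)^i * (i:ℚ) * (catalan (m + 1 - i) : ℚ)) (m+1)]
    have e1 : ∑ i ∈ range (m+1), (4:ℚ)^(i+1) * ((i:ℚ)+1) * (catalan (m + 1 - (i+1)) : ℚ)
        = 4 * (∑ i ∈ range (m+1), (4:ℚ)^i * (i:ℚ) * (catalan (m - i) : ℚ))
          + 4 * ∑ i ∈ range (m+1), (4:ℚ)^i * (catalan (m - i) : ℚ) := by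
      rw [Finset.mul_sum, Finset.mul_sum, ← Finset.sum_add_distrib]
      refine Finset.sum_congr rfl fun i hi => ?_
      have h : m + 1 - (i+1) = m - i := by omega
      rw [h]; ring
    have e2 : ∀ i : ℕ, (4:ℚ)^(i+1) * ((i:ℕ)+1 : ℚ) * (catalan (m + 1 - (i+1)) : ℚ)
        = (4:ℚ)^(i+1) * (((i+1 : ℕ)) : ℚ) * (catalan (m + 1 - (i+1)) : ℚ) := by
      intro i; push_cast; ring
    simp only [e2] at e1
    rw [e1, ih, v_eq m]
    have hb1 : (Nat.centralBinom (m+1) : ℚ) = (((m:ℚ)+2)) * (catalan (m+1) : ℚ) := by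
      have h1 := cb (m+1); push_cast at h1 ⊢; linear_combination -h1
    have hC2 := cat_rec m
    push_cast at hb1 hC2 ⊢
    linear_combination (-2 : ℚ) * hb1 + ((m:ℚ)+2) * hC2

lemma P_sym (m : ℕ) : ∀ i ∈ range (m+1),
    (catalan (m - i) : ℚ) * (catalan (m - (m - i)) : ℚ)
      = (catalan i : ℚ) * (catalan (m - i) : ℚ) := by
  intro i hi
  have hi' : i ≤ m := by simpa [Nat.lt_succ_iff] using hi
  have h : m - (m - i) = i := by omega
  rw [h, mul_comm]

lemma sig1 (m : ℕ) :
    ∑ i ∈ range (m+1), ((i:ℚ)+1) * ((catalan i : ℚ) * (catalan (m - i) : ℚ))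
      = ((m:ℚ)+2)/2 * (catalan (m+1) : ℚ) := by
  have hs := half_sym m (fun i => (catalan i : ℚ) * (catalan (m - i) : ℚ)) (P_sym m)
  have he : ∑ i ∈ range (m+1), ((i:ℚ)+1) * ((catalan i : ℚ) * (catalan (m - i) : ℚ))
      = ∑ i ∈ range (m+1), (i:ℚ) * ((catalan i : ℚ) * (catalan (m - i) : ℚ))
        + ∑ i ∈ range (m+1), (catalan i : ℚ) * (catalan (m - i) : ℚ) := by
    rw [← Finset.sum_add_distrib]
    exact Finset.sum_congr rfl fun i _ => by ring
  rw [he, catalan_conv]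
  rw [catalan_conv] at hs
  linarith [hs]

lemma sigT (m : ℕ) :
    ∑ i ∈ range (m+1), (((i:ℚ)+1) * (((m:ℚ) - i)+1)) * ((catalan i : ℚ) * (catalan (m - i) : ℚ))
      = 4 ^ m := by
  rw [← t_eq m]
  refine Finset.sum_congr rfl fun i hi => ?_
  have hi' : i ≤ m := by simpa [Nat.lt_succ_iff] using hi
  have h1 := cb i
  have h2 := cb (m - i)
  have hc : ((m - i : ℕ) : ℚ) = (m : ℚ) - i := by push_cast [Nat.cast_sub hi']; ring
  rw [hc] at h2
  linear_combination ((((m:ℚ) - i)+1) * (catalan (m-i) : ℚ)) * h1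
    + (Nat.centralBinom i : ℚ) * h2

lemma sigU (m : ℕ) :
    ∑ i ∈ range (m+1), (((i:ℚ)+1) * (i:ℚ)) * ((catalan i : ℚ) * (catalan (m - i) : ℚ))
      = ((m:ℚ)+1)*((m:ℚ)+2)/2 * (catalan (m+1) : ℚ) - 4 ^ m := by
  have he : ∀ i ∈ range (m+1),
      (((i:ℚ)+1) * (i:ℚ)) * ((catalan i : ℚ) * (catalan (m - i) : ℚ))
      = ((m:ℚ)+1) * (((i:ℚ)+1) * ((catalan i : ℚ) * (catalan (m - i) : ℚ)))
        - (((i:ℚ)+1) * (((m:ℚ) - i)+1)) * ((catalan i : ℚ) * (catalan (m - i) : ℚ)) := by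
    intro i _; ring
  rw [Finset.sum_congr rfl he, Finset.sum_sub_distrib, ← Finset.mul_sum, sig1, sigT]
  ring

lemma sigUrev (m : ℕ) :
    ∑ i ∈ range (m+1), ((((m:ℚ)-i)+1) * ((m:ℚ)-i)) * ((catalan i : ℚ) * (catalan (m - i) : ℚ))
      = ((m:ℚ)+1)*((m:ℚ)+2)/2 * (catalan (m+1) : ℚ) - 4 ^ m := by
  rw [← sigU m]
  rw [← Finset.sum_range_reflect
    (fun i => (((i:ℚ)+1) * (i:ℚ)) * ((catalan i : ℚ) * (catalan (m - i) : ℚ))) (m+1)]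
  refine Finset.sum_congr rfl fun i hi => ?_
  have hi' : i ≤ m := by simpa [Nat.lt_succ_iff] using hi
  have h0 : m + 1 - 1 - i = m - i := by omega
  have h2 : m - (m - i) = i := by omega
  have hc : ((m - i : ℕ) : ℚ) = (m : ℚ) - i := by push_cast [Nat.cast_sub hi']; ring
  rw [h0, h2, hc]
  ring

noncomputable def Aq (k : ℕ) : ℚ := (2:ℚ) ^ ((1:ℤ) - k) * catalan (k-1)
noncomputable def Bq (k : ℕ) : ℚ := -((k:ℚ)/2) * Aq k
noncomputable def Cq (k : ℕ) : ℚ :=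
  ((k:ℚ)*((k:ℚ)-1)/8) * Aq k - (2:ℚ)^(k-2)*((k:ℚ)-1)/12

lemma two_zpow_ne (e : ℤ) : ((2:ℚ)^e) ≠ 0 := zpow_ne_zero e two_ne_zero

lemma zpow_split (a b : ℤ) : (2:ℚ)^(a+b) = (2:ℚ)^a * (2:ℚ)^b :=
  zpow_add₀ two_ne_zero a b

lemma Aq_succ (i : ℕ) : Aq (i+1) = (2:ℚ)^(-(i:ℤ)) * catalan i := by
  simp only [Aq, Nat.add_sub_cancel]
  congr 2
  push_cast; ring

lemma Aq_pos (k : ℕ) : 0 < Aq k := by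
  simp only [Aq]
  have h1 : (0:ℚ) < (2:ℚ)^((1:ℤ) - k) := by positivity
  have h2 : (0:ℚ) < (catalan (k-1) : ℚ) := by
    have hb := Nat.centralBinom_pos (k-1)
    have he := succ_mul_catalan_eq_centralBinom (k-1)
    rcases Nat.eq_zero_or_pos (catalan (k-1)) with h | h
    · rw [h, Nat.mul_zero] at he; omega
    · exact_mod_cast h
  positivity

-- index facts inside range (m+1)
section terms
variable {m i : ℕ}

lemma castsub (hi : i ≤ m) : ((m - i : ℕ) : ℚ) = (m : ℚ) - i := by
  push_cast [Nat.cast_sub hi]; ring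

lemma castsubz (hi : i ≤ m) : ((m - i : ℕ) : ℤ) = (m : ℤ) - i := by
  push_cast [Nat.cast_sub hi]; ring

lemma Aq_high (hi : i ≤ m) : Aq (m+2-(1+i)) = (2:ℚ)^((i:ℤ)-(m:ℤ)) * catalan (m-i) := by
  have h1 : m + 2 - (1+i) = (m-i)+1 := by omega
  rw [h1, Aq_succ, castsubz hi]
  congr 2
  ring

end terms

lemma AqAq (m : ℕ) : ∀ i ∈ range (m+1), Aq (1+i) * Aq (m+2-(1+i))
    = (2:ℚ)^(-(m:ℤ)) * ((catalan i : ℚ) * (catalan (m-i) : ℚ)) := by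
  intro i hi
  have hi' : i ≤ m := by simpa [Nat.lt_succ_iff] using hi
  rw [Aq_high hi', show 1+i = i+1 from by omega, Aq_succ]
  have h : (2:ℚ)^(-(i:ℤ)) * (2:ℚ)^((i:ℤ)-(m:ℤ)) = (2:ℚ)^(-(m:ℤ)) := by
    rw [← zpow_split]; ring_nf
  linear_combination ((catalan i : ℚ) * (catalan (m-i) : ℚ)) * h

lemma Aq_last (m : ℕ) : Aq (m+2) = (2:ℚ)^(-(m:ℤ)-1) * catalan (m+1) := by
  rw [show m+2 = (m+1)+1 from rfl, Aq_succ]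
  congr 2
  push_cast; ring

lemma sumA (m : ℕ) :
    ∑ k ∈ Ico 1 (m+2), Aq k * Aq (m+2-k) = 2 * Aq (m+2) := by
  rw [Finset.sum_Ico_eq_sum_range]
  rw [show m+2-1 = m+1 from rfl]
  rw [Finset.sum_congr rfl (AqAq m), ← Finset.mul_sum, catalan_conv, Aq_last]
  have h := zpow_split 1 (-(m:ℤ)-1)
  rw [show (1:ℤ) + (-(m:ℤ)-1) = -(m:ℤ) from by ring, zpow_one] at h
  linear_combination (catalan (m+1) : ℚ) * h

lemma sumB (m : ℕ) :
    ∑ k ∈ Ico 1 (m+2), (Bq k * Aq (m+2-k) + Aq k * Bq (m+2-k))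
      = -((m:ℚ)+2) * Aq (m+2) := by
  rw [Finset.sum_Ico_eq_sum_range]
  rw [show m+2-1 = m+1 from rfl]
  have hterm : ∀ i ∈ range (m+1),
      Bq (1+i) * Aq (m+2-(1+i)) + Aq (1+i) * Bq (m+2-(1+i))
      = (-((m:ℚ)+2)/2) * ((2:ℚ)^(-(m:ℤ)) * ((catalan i : ℚ) * (catalan (m-i) : ℚ))) := by
    intro i hi
    have hi' : i ≤ m := by simpa [Nat.lt_succ_iff] using hi
    have hAA := AqAq m i hi
    simp only [Bq]
    have h1 : m + 2 - (1+i) = (m-i)+1 := by omega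
    have hc1 : ((1+i : ℕ) : ℚ) = (i:ℚ)+1 := by push_cast; ring
    have hc2 : ((m+2-(1+i) : ℕ) : ℚ) = ((m:ℚ)-i)+1 := by
      rw [h1]; push_cast [castsub hi']; ring
    rw [hc1, hc2]
    linear_combination (-((i:ℚ)+1)/2 - (((m:ℚ)-i)+1)/2) * hAA
  rw [Finset.sum_congr rfl hterm, ← Finset.mul_sum, ← Finset.mul_sum, catalan_conv, Aq_last]
  have h := zpow_split 1 (-(m:ℤ)-1)
  rw [show (1:ℤ) + (-(m:ℤ)-1) = -(m:ℤ) from by ring, zpow_one] at h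
  linear_combination (-((m:ℚ)+2)/2 * (catalan (m+1) : ℚ)) * h

lemma pow_combine (M i : ℕ) :
    (2:ℚ)^(i:ℕ) * (2:ℚ)^((i:ℤ)-(M:ℤ)) = (4:ℚ)^i * (2:ℚ)^(-(M:ℤ)) := by
  rw [← zpow_natCast (2:ℚ) i, ← zpow_split,
    show (i:ℤ) + ((i:ℤ)-(M:ℤ)) = ((2*i:ℕ):ℤ) + (-(M:ℤ)) from by push_cast; ring,
    zpow_split, zpow_natCast, pow_mul]
  norm_num

lemma termC (m : ℕ) : ∀ i ∈ range (m+1),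
    Cq (1+i) * Aq (m+2-(1+i)) + Bq (1+i) * Bq (m+2-(1+i)) + Aq (1+i) * Cq (m+2-(1+i))
    = (2:ℚ)^(-(m:ℤ)) * ((1/8) * ((((i:ℚ)+1)*(i:ℚ)) * ((catalan i:ℚ)*(catalan (m-i):ℚ)))
        + (1/4) * ((((i:ℚ)+1)*(((m:ℚ)-i)+1)) * ((catalan i:ℚ)*(catalan (m-i):ℚ)))
        + (1/8) * (((((m:ℚ)-i)+1)*((m:ℚ)-i)) * ((catalan i:ℚ)*(catalan (m-i):ℚ))))
      + (-(1/12)) * ((2:ℚ)^(i-1 : ℕ) * (i:ℚ) * ((2:ℚ)^((i:ℤ)-(m:ℤ)) * (catalan (m-i):ℚ)))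
      + (-(1/12)) * ((2:ℚ)^((m-i)-1 : ℕ) * ((m:ℚ)-i) * ((2:ℚ)^(-(i:ℤ)) * (catalan i:ℚ))) := by
  intro i hi
  have hi' : i ≤ m := by simpa [Nat.lt_succ_iff] using hi
  have hAhigh := Aq_high (m := m) hi'
  have h1 : m + 2 - (1+i) = (m-i)+1 := by omega
  rw [hAhigh] at *
  rw [h1, show (1:ℕ)+i = i+1 from by omega]
  simp only [Cq, Bq, Aq_succ]
  rw [show (i+1)-2 = i-1 from by omega, show ((m-i)+1)-2 = (m-i)-1 from by omega]
  have hc1 : ((i+1 : ℕ) : ℚ) = (i:ℚ)+1 := by push_cast; ring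
  have hc2 : (((m-i)+1 : ℕ) : ℚ) = ((m:ℚ)-i)+1 := by push_cast [castsub hi']; ring
  have hc3 : (2:ℚ)^(-(((m-i):ℕ):ℤ)) = (2:ℚ)^((i:ℤ)-(m:ℤ)) := by
    rw [castsubz hi']; congr 1; ring
  rw [hc1, hc2, hc3]
  have hAA : (2:ℚ)^(-(i:ℤ)) * (2:ℚ)^((i:ℤ)-(m:ℤ)) = (2:ℚ)^(-(m:ℤ)) := by
    rw [← zpow_split]; congr 1; ring
  linear_combination ((catalan i:ℚ)*(catalan (m-i):ℚ)) *
    ( (((i:ℚ)+1)*(i:ℚ)/8 + ((i:ℚ)+1)*(((m:ℚ)-i)+1)/4 + (((m:ℚ)-i)+1)*((m:ℚ)-i)/8) ) * hAA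

lemma sumT3_eq_sumT2 (m : ℕ) :
    ∑ i ∈ range (m+1), (2:ℚ)^((m-i)-1:ℕ) * ((m:ℚ)-i) * ((2:ℚ)^(-(i:ℤ)) * (catalan i:ℚ))
    = ∑ i ∈ range (m+1), (2:ℚ)^(i-1:ℕ) * (i:ℚ) * ((2:ℚ)^((i:ℤ)-(m:ℤ)) * (catalan (m-i):ℚ)) := by
  rw [← Finset.sum_range_reflect
    (fun i => (2:ℚ)^((m-i)-1:ℕ) * ((m:ℚ)-i) * ((2:ℚ)^(-(i:ℤ)) * (catalan i:ℚ))) (m+1)]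
  refine Finset.sum_congr rfl fun j hj => ?_
  have hj' : j ≤ m := by simpa [Nat.lt_succ_iff] using hj
  have h0 : m + 1 - 1 - j = m - j := by omega
  have h2 : m - (m - j) = j := by omega
  rw [h0, h2, castsub hj']
  have hc3 : (2:ℚ)^(-(((m-j):ℕ):ℤ)) = (2:ℚ)^((j:ℤ)-(m:ℤ)) := by
    rw [castsubz hj']; congr 1; ring
  rw [hc3]
  ring

lemma sumT2succ (M : ℕ) :
    ∑ i ∈ range ((M+1)+1), (2:ℚ)^(i-1:ℕ) * (i:ℚ)
        * ((2:ℚ)^((i:ℤ)-((M+1:ℕ):ℤ)) * (catalan ((M+1)-i):ℚ))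
    = (2:ℚ)^(-(M:ℤ)) * (2*((M:ℚ)+1) * 4^M - ((M:ℚ)+1)*((M:ℚ)+2) * (catalan (M+1) : ℚ)
        + ((4:ℚ)^(M+1) - (Nat.centralBinom (M+1) : ℚ))/2) := by
  rw [Finset.sum_range_succ' (fun i => (2:ℚ)^(i-1:ℕ) * (i:ℚ)
        * ((2:ℚ)^((i:ℤ)-((M+1:ℕ):ℤ)) * (catalan ((M+1)-i):ℚ))) (M+1)]
  have h0 : (2:ℚ)^((0:ℕ)-1:ℕ) * ((0:ℕ):ℚ)
      * ((2:ℚ)^(((0:ℕ):ℤ)-((M+1:ℕ):ℤ)) * (catalan ((M+1)-0):ℚ)) = 0 := by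
    norm_num
  rw [h0, add_zero]
  have hterm : ∀ i ∈ range (M+1),
      (2:ℚ)^((i+1)-1:ℕ) * ((i+1:ℕ):ℚ)
        * ((2:ℚ)^(((i+1:ℕ):ℤ)-((M+1:ℕ):ℤ)) * (catalan ((M+1)-(i+1)):ℚ))
      = (2:ℚ)^(-(M:ℤ)) * ((4:ℚ)^i * (i:ℚ) * (catalan (M-i):ℚ)
          + (4:ℚ)^i * (catalan (M-i):ℚ)) := by
    intro i hi
    have e1 : (i+1)-1 = i := by omega
    have e2 : (M+1)-(i+1) = M - i := by omega
    have e3 : (((i+1:ℕ)):ℤ) - ((M+1:ℕ):ℤ) = (i:ℤ) - (M:ℤ) := by push_cast; ring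
    rw [e1, e2, e3]
    have := pow_combine M i
    have hc : ((i+1:ℕ):ℚ) = (i:ℚ)+1 := by push_cast; ring
    rw [hc]
    linear_combination (((i:ℚ)+1) * (catalan (M-i):ℚ)) * this
  rw [Finset.sum_congr rfl hterm, ← Finset.mul_sum, Finset.sum_add_distrib, u_eq, v_eq]

lemma sumC (m : ℕ) :
    ∑ k ∈ Ico 1 (m+2), (Cq k * Aq (m+2-k) + Bq k * Bq (m+2-k) + Aq k * Cq (m+2-k))
      = 2 * Cq (m+2) + ((m:ℚ)+2)*((m:ℚ)+1)/6 * Aq (m+2) := by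
  rw [Finset.sum_Ico_eq_sum_range, show m+2-1 = m+1 from rfl,
    Finset.sum_congr rfl (termC m), Finset.sum_add_distrib, Finset.sum_add_distrib,
    ← Finset.mul_sum, ← Finset.mul_sum, ← Finset.mul_sum,
    Finset.sum_add_distrib, Finset.sum_add_distrib,
    ← Finset.mul_sum, ← Finset.mul_sum, ← Finset.mul_sum,
    sigU m, sigT m, sigUrev m, sumT3_eq_sumT2 m, Aq_last m]
  rcases m with _ | M
  · simp only [Finset.sum_range_one, Cq, Aq]
    norm_num [catalan_one]
  · rw [sumT2succ M]
    simp only [Cq]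
    rw [Aq_last (M+1), show M+1+2-2 = M+1 from rfl, show M+1+1 = M+2 from rfl]
    have f1 : (2:ℚ)^(-(M:ℤ)-1) * 2 = (2:ℚ)^(-(M:ℤ)) := by
      have h := zpow_split (-(M:ℤ)-1) 1
      rw [show (-(M:ℤ)-1)+1 = -(M:ℤ) from by ring] at h
      rw [h, zpow_one]
    have f2 : (2:ℚ)^(-(M:ℤ)-1-1) * 4 = (2:ℚ)^(-(M:ℤ)) := by
      have h := zpow_split (-(M:ℤ)-1-1) 2
      rw [show (-(M:ℤ)-1-1)+2 = -(M:ℤ) from by ring] at h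
      rw [h]; norm_num
    have f3 : (2:ℚ)^(-(M:ℤ)) * (4:ℚ)^M * 2 = (2:ℚ)^((M+1:ℕ)) := by
      rw [show (4:ℚ) = 2^2 from by norm_num, ← pow_mul, ← zpow_natCast (2:ℚ) (2*M),
        ← zpow_split, show -(M:ℤ) + ((2*M:ℕ):ℤ) = ((M:ℕ):ℤ) from by push_cast; ring,
        ← zpow_natCast (2:ℚ) (M+1),
        show (((M+1:ℕ)):ℤ) = ((M:ℕ):ℤ) + 1 from by push_cast; ring,
        zpow_split, zpow_one]
    have hb := cb (M+1)
    have hcat := cat_rec M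
    push_cast at hb hcat ⊢
    rw [show -((M:ℤ)+1) = -(M:ℤ)-1 from by ring]
    linear_combination ((M:ℚ)+2)*((M:ℚ)+3)/16*(catalan (M+2):ℚ) * f1
      - 5*((M:ℚ)+2)*((M:ℚ)+3)/48*(catalan (M+2):ℚ) * f2
      - ((M:ℚ)+2)/6 * f3 - (2:ℚ)^(-(M:ℤ))/12 * hb
      - ((M:ℚ)+2)*(2:ℚ)^(-(M:ℤ))/24 * hcat



lemma mul_coeff_top1 {p q : ℚ[X]} {a b : ℕ} (hp : p.natDegree ≤ a+1) (hq : q.natDegree ≤ b+1) :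
    (p*q).coeff (a+b+2) = p.coeff (a+1) * q.coeff (b+1) := by
  have := Polynomial.coeff_mul_add_eq_of_natDegree_le hp hq
  rwa [show (a+1)+(b+1) = a+b+2 from by omega] at this

lemma mul_coeff_mid {p q : ℚ[X]} {a b : ℕ} (hp : p.natDegree ≤ a+1) (hq : q.natDegree ≤ b+1) :
    (p*q).coeff (a+b+1) = p.coeff a * q.coeff (b+1) + p.coeff (a+1) * q.coeff b := by
  rw [Polynomial.coeff_mul]
  rw [show (∑ x ∈ Finset.HasAntidiagonal.antidiagonal (a+b+1), p.coeff x.1 * q.coeff x.2)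
      = ∑ x ∈ ({(a, b+1), (a+1, b)} : Finset (ℕ × ℕ)), p.coeff x.1 * q.coeff x.2 from ?_]
  · rw [Finset.sum_pair (by simp)]
  · symm
    apply Finset.sum_subset
    · intro x hx
      simp only [Finset.mem_insert, Finset.mem_singleton] at hx
      rcases hx with rfl | rfl <;> · rw [Finset.HasAntidiagonal.mem_antidiagonal]; omega
    · rintro ⟨x1, x2⟩ hx hxs
      rw [Finset.HasAntidiagonal.mem_antidiagonal] at hx
      simp only [Finset.mem_insert, Finset.mem_singleton, Prod.mk.injEq, not_or] at hxs
      dsimp only at hx ⊢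
      rcases Nat.lt_or_ge x1 a with h | h
      · have hlt : b + 1 < x2 := by omega
        rw [Polynomial.coeff_eq_zero_of_natDegree_lt (lt_of_le_of_lt hq hlt), mul_zero]
      · rcases Nat.lt_or_ge (a+1) x1 with h2 | h2
        · rw [Polynomial.coeff_eq_zero_of_natDegree_lt (lt_of_le_of_lt hp h2), zero_mul]
        · exfalso
          rcases (by omega : x1 = a ∨ x1 = a + 1) with rfl | rfl
          · exact hxs.1 ⟨rfl, by omega⟩
          · exact hxs.2 ⟨rfl, by omega⟩

lemma mul_coeff_low {p q : ℚ[X]} {a b : ℕ} (hp : p.natDegree ≤ a+2) (hq : q.natDegree ≤ b+2) :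
    (p*q).coeff (a+b+2) = p.coeff a * q.coeff (b+2) + p.coeff (a+1) * q.coeff (b+1)
      + p.coeff (a+2) * q.coeff b := by
  rw [Polynomial.coeff_mul]
  rw [show (∑ x ∈ Finset.HasAntidiagonal.antidiagonal (a+b+2), p.coeff x.1 * q.coeff x.2)
      = ∑ x ∈ ({(a, b+2), (a+1, b+1), (a+2, b)} : Finset (ℕ × ℕ)), p.coeff x.1 * q.coeff x.2 from ?_]
  · rw [Finset.sum_insert (by simp), Finset.sum_pair (by simp)]
    ring
  · symm
    apply Finset.sum_subset
    · intro x hx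
      simp only [Finset.mem_insert, Finset.mem_singleton] at hx
      rcases hx with rfl | rfl | rfl <;> · rw [Finset.HasAntidiagonal.mem_antidiagonal]; omega
    · rintro ⟨x1, x2⟩ hx hxs
      rw [Finset.HasAntidiagonal.mem_antidiagonal] at hx
      simp only [Finset.mem_insert, Finset.mem_singleton, Prod.mk.injEq, not_or] at hxs
      dsimp only at hx ⊢
      rcases Nat.lt_or_ge x1 a with h | h
      · have hlt : b + 2 < x2 := by omega
        rw [Polynomial.coeff_eq_zero_of_natDegree_lt (lt_of_le_of_lt hq hlt), mul_zero]
      · rcases Nat.lt_or_ge (a+2) x1 with h2 | h2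
        · rw [Polynomial.coeff_eq_zero_of_natDegree_lt (lt_of_le_of_lt hp h2), zero_mul]
        · exfalso
          rcases (by omega : x1 = a ∨ x1 = a + 1 ∨ x1 = a + 2) with rfl | rfl | rfl
          · exact hxs.1 ⟨rfl, by omega⟩
          · exact hxs.2.1 ⟨rfl, by omega⟩
          · exact hxs.2.2 ⟨rfl, by omega⟩

lemma degree_iterate_derivative_le (p : ℚ[X]) (k : ℕ) :
    (Polynomial.derivative^[k] p).degree ≤ p.degree := by
  induction k with
  | zero => simp
  | succ k ih =>
    rw [Function.iterate_succ_apply']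
    exact le_trans Polynomial.degree_derivative_le ih

lemma KOp_degree_le (P : ℚ[X]) : (KOp P).degree ≤ P.degree := by
  unfold KOp
  have h2 : ((2 : ℚ[X])) = Polynomial.C 2 := by
    rw [map_ofNat]
  calc (2 * ∑ r ∈ Finset.Icc 1 (P.natDegree + 1), _ : ℚ[X]).degree
      ≤ (2:ℚ[X]).degree + _ := Polynomial.degree_mul_le _ _
    _ ≤ 0 + P.degree := by
        apply add_le_add
        · rw [h2]; exact Polynomial.degree_C_le
        · refine le_trans (Polynomial.degree_sum_le _ _) ?_
          refine Finset.sup_le fun r hr => ?_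
          refine le_trans (Polynomial.degree_mul_le _ _) ?_
          have hd := degree_iterate_derivative_le P (2*r-2)
          calc (Polynomial.C _).degree + (Polynomial.derivative^[2*r-2] P).degree
              ≤ 0 + P.degree := add_le_add Polynomial.degree_C_le hd
            _ = P.degree := zero_add _
    _ = P.degree := zero_add _


lemma bern2 : _root_.bernoulli 2 = 1/6 := by
  rw [bernoulli_eq_bernoulli'_of_ne_one (by norm_num), bernoulli'_two]

lemma bern4 : _root_.bernoulli 4 = -1/30 := by
  rw [bernoulli_eq_bernoulli'_of_ne_one (by norm_num), bernoulli'_four]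

lemma KOp_coeff (P : ℚ[X]) (i : ℕ) (h : P.natDegree ≤ i + 3) :
    (KOp P).coeff i = (1/2) * P.coeff i - (((i:ℚ)+1)*((i:ℚ)+2)/24) * P.coeff (i+2) := by
  unfold KOp
  have h2 : ((2 : ℚ[X])) = Polynomial.C 2 := by rw [map_ofNat]
  rw [h2, Polynomial.coeff_C_mul, Polynomial.finset_sum_coeff]
  simp only [Polynomial.coeff_C_mul, Polynomial.coeff_iterate_derivative, smul_eq_mul]
  rcases Nat.lt_or_ge P.natDegree 1 with hd | hd
  · have hd0 : P.natDegree = 0 := by omega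
    rw [hd0]
    rw [show Finset.Icc 1 (0+1) = {1} from rfl, Finset.sum_singleton]
    have hc2 : P.coeff (i+2) = 0 := Polynomial.coeff_eq_zero_of_natDegree_lt (by omega)
    rw [hc2]
    norm_num [bern2, Nat.factorial]
    ring
  · have hsub : Finset.Icc 1 2 ⊆ Finset.Icc 1 (P.natDegree + 1) := by
      intro r hr; simp only [Finset.mem_Icc] at *; omega
    rw [← Finset.sum_subset hsub ?_]
    · rw [show Finset.Icc 1 2 = {1, 2} from rfl, Finset.sum_insert (by decide),
        Finset.sum_singleton]
      norm_num [bern2, bern4, Nat.factorial, Nat.descFactorial]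
      push_cast
      ring
    · intro r hr hrs
      simp only [Finset.mem_Icc] at hr hrs
      have hc : P.coeff (i + (2*r-2)) = 0 := Polynomial.coeff_eq_zero_of_natDegree_lt (by omega)
      rw [hc]
      ring

end BCAux

open BCAux in
/-- The Bernoulli-Catalan polynomial `Q_n` has degree `n`, leading coefficient
`A_n = 2^{1-n} C_{n-1}`, coefficient of `z^{n-1}` equal to `-(n/2) A_n`, and for `n ≥ 2`
coefficient of `z^{n-2}` equal to `(n(n-1)/8) A_n - 2^{n-2}(n-1)/12`. -/
theorem bernoulliCatalan_leading_coeffs (Q : ℕ → Polynomial ℚ)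
    (h0 : Q 0 = 0) (h1 : Q 1 = X - C (1 / 2))
    (hrec : ∀ n : ℕ, 2 ≤ n → Q n = KOp (∑ k ∈ Finset.Ico 1 n, Q k * Q (n - k))) :
    ∀ n : ℕ, 1 ≤ n →
      (Q n).degree = n ∧
      (Q n).coeff n = (2 : ℚ) ^ ((1 : ℤ) - n) * catalan (n - 1) ∧
      (Q n).coeff (n - 1) = -((n : ℚ) / 2) * ((2 : ℚ) ^ ((1 : ℤ) - n) * catalan (n - 1)) ∧
      (2 ≤ n →
        (Q n).coeff (n - 2)
          = ((n : ℚ) * ((n : ℚ) - 1) / 8) * ((2 : ℚ) ^ ((1 : ℤ) - n) * catalan (n - 1))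
            - (2 : ℚ) ^ (n - 2) * ((n : ℚ) - 1) / 12) := by
  suffices H : ∀ n : ℕ, 1 ≤ n → (Q n).degree = n ∧
      ((X:ℚ[X])^2 * Q n).coeff (n+2) = Aq n ∧
      ((X:ℚ[X])^2 * Q n).coeff (n+1) = Bq n ∧
      ((X:ℚ[X])^2 * Q n).coeff n = Cq n by
    intro n hn
    obtain ⟨hd, h2, h3, h4⟩ := H n hn
    rw [Polynomial.coeff_X_pow_mul (Q n) 2 n] at h2
    have e3 := Polynomial.coeff_X_pow_mul (Q n) 2 (n-1)
    rw [show n-1+2 = n+1 from by omega] at e3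
    rw [e3] at h3
    simp only [Aq, Bq, Cq] at h2 h3 h4
    refine ⟨hd, h2, h3, fun h2n => ?_⟩
    have e4 := Polynomial.coeff_X_pow_mul (Q n) 2 (n-2)
    rw [show n-2+2 = n from by omega] at e4
    rw [e4] at h4
    exact h4
  intro n
  induction n using Nat.strong_induction_on with
  | _ n IH =>
    intro hn
    rcases Nat.lt_or_ge n 2 with hlt | h2n
    · have hn1 : n = 1 := by omega
      subst hn1
      rw [h1]
      refine ⟨by simpa using Polynomial.degree_X_sub_C (1/2 : ℚ), ?_, ?_, ?_⟩ <;>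
      · rw [show (X:ℚ[X])^2 * (X - C (1/2)) = X^3 - C (1/2) * X^2 from by ring]
        simp only [Polynomial.coeff_sub, Polynomial.coeff_C_mul, Polynomial.coeff_X_pow,
          Aq, Bq, Cq]
        norm_num
    · obtain ⟨m, rfl⟩ : ∃ m, n = m + 2 := ⟨n - 2, by omega⟩
      have hQ : Q (m+2) = KOp (∑ k ∈ Finset.Ico 1 (m+2), Q k * Q (m+2-k)) :=
        hrec (m+2) (by omega)
      set S := ∑ k ∈ Finset.Ico 1 (m+2), Q k * Q (m+2-k) with hSdef
      -- facts for each k in the range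
      have hfacts : ∀ k, 1 ≤ k → k ≤ m+1 →
          (Q k).degree = k ∧ ((X:ℚ[X])^2 * Q k).natDegree ≤ k + 2 ∧
          ((X:ℚ[X])^2 * Q k).coeff (k+2) = Aq k ∧
          ((X:ℚ[X])^2 * Q k).coeff (k+1) = Bq k ∧
          ((X:ℚ[X])^2 * Q k).coeff k = Cq k := by
        intro k hk1 hk2
        obtain ⟨hd, ha, hb, hc⟩ := IH k (by omega) hk1
        have hknat : (Q k).natDegree = k := Polynomial.natDegree_eq_of_degree_eq_some hd
        refine ⟨hd, ?_, ha, hb, hc⟩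
        refine le_trans Polynomial.natDegree_mul_le ?_
        rw [Polynomial.natDegree_X_pow, hknat]
        omega
      -- degree of S
      have hSdeg : S.degree ≤ ((m+2 : ℕ) : WithBot ℕ) := by
        rw [hSdef]
        refine le_trans (Polynomial.degree_sum_le _ _) ?_
        refine Finset.sup_le fun k hk => ?_
        rw [Finset.mem_Ico] at hk
        obtain ⟨hdk, -, -, -, -⟩ := hfacts k hk.1 (by omega)
        obtain ⟨hdj, -, -, -, -⟩ := hfacts (m+2-k) (by omega) (by omega)
        refine le_trans (Polynomial.degree_mul_le _ _) ?_
        rw [hdk, hdj, ← Nat.cast_add, show k + (m+2-k) = m+2 from by omega]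
      have hSnat : S.natDegree ≤ m+2 := Polynomial.natDegree_le_iff_degree_le.mpr hSdeg
      -- coefficients of each product
      have hprod : ∀ k ∈ Finset.Ico 1 (m+2),
          (Q k * Q (m+2-k)).coeff (m+2) = Aq k * Aq (m+2-k) ∧
          (Q k * Q (m+2-k)).coeff (m+1) = Bq k * Aq (m+2-k) + Aq k * Bq (m+2-k) ∧
          (Q k * Q (m+2-k)).coeff m
            = Cq k * Aq (m+2-k) + Bq k * Bq (m+2-k) + Aq k * Cq (m+2-k) := by
        intro k hk
        rw [Finset.mem_Ico] at hk
        obtain ⟨hk1, hk2⟩ := hk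
        obtain ⟨-, hpdeg, hpa, hpb, hpc⟩ := hfacts k hk1 (by omega)
        obtain ⟨-, hqdeg, hqa, hqb, hqc⟩ := hfacts (m+2-k) (by omega) (by omega)
        set j := m + 2 - k with hj
        have hkj : k + j = m + 2 := by omega
        have hpq : ((X:ℚ[X])^2 * Q k) * ((X:ℚ[X])^2 * Q j) = X^4 * (Q k * Q j) := by ring
        refine ⟨?_, ?_, ?_⟩
        · have e := Polynomial.coeff_X_pow_mul (Q k * Q j) 4 (m+2)
          have e2 := Polynomial.coeff_mul_add_eq_of_natDegree_le hpdeg hqdeg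
          rw [show (k+2)+(j+2) = (m+2)+4 from by omega] at e2
          rw [← e, ← hpq, e2, hpa, hqa]
        · have e := Polynomial.coeff_X_pow_mul (Q k * Q j) 4 (m+1)
          have e2 := mul_coeff_mid (a := k+1) (b := j+1) hpdeg hqdeg
          rw [show (k+1)+(j+1)+1 = (m+1)+4 from by omega] at e2
          rw [← e, ← hpq, e2, hpa, hpb, hqa, hqb]
        · have e := Polynomial.coeff_X_pow_mul (Q k * Q j) 4 m
          have e2 := mul_coeff_low (a := k) (b := j) hpdeg hqdeg
          rw [show k+j+2 = m+4 from by omega] at e2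
          rw [← e, ← hpq, e2, hpa, hpb, hpc, hqa, hqb, hqc]
      -- coefficients of S
      have hSc2 : S.coeff (m+2) = 2 * Aq (m+2) := by
        rw [hSdef, Polynomial.finset_sum_coeff,
          Finset.sum_congr rfl (fun k hk => (hprod k hk).1), sumA]
      have hSc1 : S.coeff (m+1) = -((m:ℚ)+2) * Aq (m+2) := by
        rw [hSdef, Polynomial.finset_sum_coeff,
          Finset.sum_congr rfl (fun k hk => (hprod k hk).2.1)]
        have := sumB m
        push_cast at this ⊢
        exact this
      have hSc0 : S.coeff m = 2 * Cq (m+2) + ((m:ℚ)+2)*((m:ℚ)+1)/6 * Aq (m+2) := by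
        rw [hSdef, Polynomial.finset_sum_coeff,
          Finset.sum_congr rfl (fun k hk => (hprod k hk).2.2), sumC]
      have hS4 : S.coeff (m+4) = 0 :=
        Polynomial.coeff_eq_zero_of_natDegree_lt (by omega)
      have hS3 : S.coeff (m+3) = 0 :=
        Polynomial.coeff_eq_zero_of_natDegree_lt (by omega)
      -- coefficients of Q (m+2)
      have hK2 : (Q (m+2)).coeff (m+2) = Aq (m+2) := by
        rw [hQ, KOp_coeff S (m+2) (by omega), show m+2+2 = m+4 from rfl, hS4, hSc2]
        ring
      have hK1 : (Q (m+2)).coeff (m+1) = Bq (m+2) := by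
        rw [hQ, KOp_coeff S (m+1) (by omega), show m+1+2 = m+3 from rfl, hS3, hSc1, Bq]
        push_cast
        ring
      have hK0 : (Q (m+2)).coeff m = Cq (m+2) := by
        rw [hQ, KOp_coeff S m (by omega), hSc2, hSc0]
        push_cast
        ring
      have hdeg : (Q (m+2)).degree = ((m+2 : ℕ) : WithBot ℕ) := by
        refine Polynomial.degree_eq_of_le_of_coeff_ne_zero ?_ ?_
        · rw [hQ]
          exact le_trans (KOp_degree_le S) hSdeg
        · rw [hK2]
          exact (Aq_pos (m+2)).ne'
      refine ⟨hdeg, ?_, ?_, ?_⟩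
      · rw [Polynomial.coeff_X_pow_mul (Q (m+2)) 2 (m+2)]
        exact hK2
      · rw [show m+2+1 = m+1+2 from by omega, Polynomial.coeff_X_pow_mul (Q (m+2)) 2 (m+1)]
        exact hK1
      · rw [Polynomial.coeff_X_pow_mul (Q (m+2)) 2 m]
        exact hK0
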